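/- arXiv:2605.30118 — 2 statements merged into one kernel-verified Lean document; each statement's English description precedes it below -/
import Mathlib

section
/- Let H be a real Hilbert space with continuous coercive symmetric bilinear form a (constants α, β), let M be a Hilbert space and Π : H → M a bounded linear map. Let Ṽ = range of the a-orthogonal projection onto the a-orthogonal complement of ker Π (i.e. Ṽ ⊥_a ker Π). Suppose u ∈ H solves a(u,v) = ⟨f, Πv⟩_M + ⟨g, v⟩_H for all v ∈ H, where f ∈ M and g ∈ H. If Ru ∈ Ṽ denotes the a-orthogonal projection of u, then α‖u - Ru‖_H ≤ ‖g‖_H. In particular the part of the right-hand side seen through Π contributes no error. -/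
open scoped RealInnerProductSpace

/-- If `u` solves `a u v = ⟪f, P v⟫ + ⟪g, v⟫` for all `v`, and `Ru` is
the `a`-orthogonal projection of `u` onto the `a`-orthogonal complement `Ṽ` of
`ker P` (so `u - Ru ∈ ker P` and `Ru ⊥_a ker P`), then `α ‖u - Ru‖ ≤ ‖g‖`:
the part of the right-hand side seen through `P` contributes no error. -/
theorem stmt6
    {H M : Type*} [NormedAddCommGroup H] [InnerProductSpace ℝ H] [CompleteSpace H]
    [NormedAddCommGroup M] [InnerProductSpace ℝ M] [CompleteSpace M]
    (a : H →ₗ[ℝ] H →ₗ[ℝ] ℝ) (α β : ℝ) (hα : 0 < α) (hαβ : α ≤ β)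
    (hsymm : ∀ u v : H, a u v = a v u)
    (hcont : ∀ u v : H, a u v ≤ β * ‖u‖ * ‖v‖)
    (hcoer : ∀ u : H, α * ‖u‖ ^ 2 ≤ a u u)
    (P : H →L[ℝ] M)
    (f : M) (g : H)
    (u : H) (hu : ∀ v : H, a u v = ⟪f, P v⟫ + ⟪g, v⟫)
    (Ru : H)
    (hker : u - Ru ∈ LinearMap.ker (P : H →ₗ[ℝ] M))
    (horth : ∀ w ∈ LinearMap.ker (P : H →ₗ[ℝ] M), a Ru w = 0) :
    α * ‖u - Ru‖ ≤ ‖g‖ := by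
  set e := u - Ru with he
  have hPe : P e = 0 := hker
  have hae : a e e = ⟪g, e⟫ := by
    have h1 : a u e = ⟪g, e⟫ := by
      rw [hu e, hPe]
      simp
    have h2 : a Ru e = 0 := horth e hker
    have : a e e = a u e - a Ru e := by
      simp [he, map_sub, hsymm u Ru]
    rw [this, h1, h2, sub_zero]
  have hbound : α * ‖e‖ ^ 2 ≤ ‖g‖ * ‖e‖ := by
    calc α * ‖e‖ ^ 2 ≤ a e e := hcoer e
      _ = ⟪g, e⟫ := hae
      _ ≤ ‖g‖ * ‖e‖ := real_inner_le_norm g e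
  rcases eq_or_lt_of_le (norm_nonneg e) with h0 | h0
  · rw [← h0, mul_zero] at *; simpa [← h0] using norm_nonneg g
  · nlinarith [hbound]
end

section
/- Let H be a Hilbert space, a a continuous coercive symmetric bilinear form with constants α, β, Π : H → M a bounded map into a Hilbert space M, W = ker Π closed. Assume the kernel approximation property: ‖ι w‖_{H₁} ≤ C_Π H ‖w‖_a for all w ∈ W, where ι : H → H₁ is a continuous embedding into a pivot Hilbert space H₁ and H > 0 a parameter. Let u ∈ H, and suppose ψ := u - Q ∈ W for some Q ∈ H, and that α‖ψ‖² ≤ (g₁, ι ψ)_{H₁} + a(r, ψ) where g₁ ∈ H₁ satisfies ‖g₁‖_{H₁} ≤ C₁ H^{k+1} and r ∈ H satisfies ‖r‖_a ≤ C₂ H^{m}. Then ‖ψ‖_a ≤ C (H^{k+1} · H/α + H^m) up to constants depending only on α, β, C_Π; i.e. ‖ψ‖_a ≲ H^{k+2} + H^m. -/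
open scoped RealInnerProductSpace

private lemma stmt13_aux (α β K F : ℝ) (hα : 0 < α) (hβ : 0 < β)
    (hK : 0 ≤ K) (hF : 0 ≤ F) (h : α / β * F ^ 2 ≤ K * F) : F ≤ β / α * K := by
  rcases eq_or_lt_of_le hF with h0 | h0
  · rw [← h0]; positivity
  · rw [div_mul_eq_mul_div, div_le_iff₀ hβ] at h
    rw [div_mul_eq_mul_div, le_div_iff₀ hα]
    nlinarith

/-- Abstract recursion step of the enriched error analysis: if
`ψ = u - Q ∈ W = ker P` satisfies `α‖ψ‖² ≤ (g₁, ιψ)_{H₁} + a(r, ψ)` with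
`‖g₁‖ ≤ C₁ H^{k+1}` and `‖r‖_a ≤ C₂ H^m`, and `W` has the kernel approximation
property `‖ιw‖ ≤ C_P H ‖w‖_a`, then `‖ψ‖_a ≤ C (H^{k+2} + H^m)` with a constant
depending only on the fixed data `α, β, C_P, C₁, C₂` (and not on `H, u, Q, g₁, r`). -/
theorem stmt13
    {H H₁ M : Type*} [NormedAddCommGroup H] [InnerProductSpace ℝ H] [CompleteSpace H]
    [NormedAddCommGroup H₁] [InnerProductSpace ℝ H₁] [CompleteSpace H₁]
    [NormedAddCommGroup M] [InnerProductSpace ℝ M] [CompleteSpace M]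
    (ι : H →L[ℝ] H₁)
    (a : H →ₗ[ℝ] H →ₗ[ℝ] ℝ) (α β : ℝ) (hα : 0 < α) (hαβ : α ≤ β)
    (hsymm : ∀ u v : H, a u v = a v u)
    (hcont : ∀ u v : H, a u v ≤ β * ‖u‖ * ‖v‖)
    (hcoer : ∀ u : H, α * ‖u‖ ^ 2 ≤ a u u)
    (P : H →L[ℝ] M)
    (C_P C₁ C₂ : ℝ) (hCP : 0 < C_P) (hC₁ : 0 < C₁) (hC₂ : 0 < C₂)
    (k m : ℕ) :
    ∃ C : ℝ, 0 < C ∧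
      ∀ Hh : ℝ, 0 < Hh →
        (∀ w ∈ LinearMap.ker (P : H →ₗ[ℝ] M), ‖ι w‖ ≤ C_P * Hh * Real.sqrt (a w w)) →
        ∀ u Q : H, ∀ g₁ : H₁, ∀ r : H,
          u - Q ∈ LinearMap.ker (P : H →ₗ[ℝ] M) →
          α * ‖u - Q‖ ^ 2 ≤ ⟪g₁, ι (u - Q)⟫ + a r (u - Q) →
          ‖g₁‖ ≤ C₁ * Hh ^ (k + 1) →
          Real.sqrt (a r r) ≤ C₂ * Hh ^ m →
          Real.sqrt (a (u - Q) (u - Q)) ≤ C * (Hh ^ (k + 2) + Hh ^ m) := by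

  have hβ0 : 0 < β := lt_of_lt_of_le hα hαβ
  refine ⟨β / α * (C₁ * C_P + C₂), by positivity, ?_⟩
  intro Hh hH hker u Q g₁ r hW hmain hg hr
  set ψ := u - Q with hψ
  have hA : 0 ≤ a ψ ψ := le_trans (mul_nonneg hα.le (pow_nonneg (norm_nonneg _) 2)) (hcoer ψ)
  have hR : 0 ≤ a r r := le_trans (mul_nonneg hα.le (pow_nonneg (norm_nonneg _) 2)) (hcoer r)
  set E := Real.sqrt (a ψ ψ) with hE
  have hEnn : 0 ≤ E := Real.sqrt_nonneg _
  have hE2 : E ^ 2 = a ψ ψ := Real.sq_sqrt hA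
  clear_value ψ
  -- Cauchy–Schwarz for the bilinear form a
  have hCS : a r ψ ≤ Real.sqrt (a r r) * E := by
    have hq : ∀ x : ℝ, 0 ≤ (a ψ ψ) * (x * x) + (2 * a r ψ) * x + a r r := by
      intro x
      have h0 : 0 ≤ a (x • ψ + r) (x • ψ + r) :=
        le_trans (mul_nonneg hα.le (pow_nonneg (norm_nonneg _) 2)) (hcoer (x • ψ + r))
      have hexp : a (x • ψ + r) (x • ψ + r)
          = (a ψ ψ) * (x * x) + (2 * a r ψ) * x + a r r := by
        simp only [map_add, map_smul, LinearMap.add_apply, LinearMap.smul_apply,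
          smul_eq_mul, hsymm ψ r]
        ring
      linarith [hexp ▸ h0]
    have hd := discrim_le_zero hq
    rw [discrim] at hd
    have h1 : (a r ψ) ^ 2 ≤ a r r * a ψ ψ := by nlinarith
    calc a r ψ ≤ |a r ψ| := le_abs_self _
      _ = Real.sqrt ((a r ψ) ^ 2) := (Real.sqrt_sq_eq_abs _).symm
      _ ≤ Real.sqrt (a r r * a ψ ψ) := Real.sqrt_le_sqrt h1
      _ = Real.sqrt (a r r) * E := Real.sqrt_mul hR _
  have hιψ : ‖ι ψ‖ ≤ C_P * Hh * E := hker ψ hW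
  have hinner : ⟪g₁, ι ψ⟫ ≤ ‖g₁‖ * ‖ι ψ‖ := real_inner_le_norm _ _
  have hAβ : a ψ ψ ≤ β * ‖ψ‖ ^ 2 := by
    have := hcont ψ ψ; nlinarith [norm_nonneg ψ]
  have h2 : α * ‖ψ‖ ^ 2 ≤ (C₁ * C_P * Hh ^ (k + 2) + C₂ * Hh ^ m) * E := by
    have hga : ‖g₁‖ * ‖ι ψ‖ ≤ C₁ * Hh ^ (k + 1) * (C_P * Hh * E) := by
      have hg1nn : (0:ℝ) ≤ ‖g₁‖ := norm_nonneg _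
      have hinn : (0:ℝ) ≤ ‖ι ψ‖ := norm_nonneg _
      have hEP : (0:ℝ) ≤ C_P * Hh * E := by positivity
      calc ‖g₁‖ * ‖ι ψ‖ ≤ (C₁ * Hh ^ (k + 1)) * ‖ι ψ‖ := by
            apply mul_le_mul_of_nonneg_right hg hinn
        _ ≤ (C₁ * Hh ^ (k + 1)) * (C_P * Hh * E) := by
            apply mul_le_mul_of_nonneg_left hιψ (by positivity)
    have hra : Real.sqrt (a r r) * E ≤ C₂ * Hh ^ m * E :=
      mul_le_mul_of_nonneg_right hr hEnn
    calc α * ‖ψ‖ ^ 2 ≤ ⟪g₁, ι ψ⟫ + a r ψ := hmain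
      _ ≤ ‖g₁‖ * ‖ι ψ‖ + Real.sqrt (a r r) * E := add_le_add hinner hCS
      _ ≤ C₁ * Hh ^ (k + 1) * (C_P * Hh * E) + C₂ * Hh ^ m * E :=
          add_le_add hga hra
      _ = (C₁ * C_P * Hh ^ (k + 2) + C₂ * Hh ^ m) * E := by ring
  have key : α / β * E ^ 2 ≤ (C₁ * C_P * Hh ^ (k + 2) + C₂ * Hh ^ m) * E := by
    have hβ : 0 < β := lt_of_lt_of_le hα hαβ
    have : α / β * E ^ 2 ≤ α * ‖ψ‖ ^ 2 := by
      rw [hE2]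
      rw [div_mul_eq_mul_div, div_le_iff₀ hβ]
      nlinarith [norm_nonneg ψ]
    linarith
  have hβ : 0 < β := lt_of_lt_of_le hα hαβ
  have hKle : C₁ * C_P * Hh ^ (k + 2) + C₂ * Hh ^ m
      ≤ (C₁ * C_P + C₂) * (Hh ^ (k + 2) + Hh ^ m) := by
    have h1 : (0:ℝ) ≤ Hh ^ (k + 2) := by positivity
    have h2 : (0:ℝ) ≤ Hh ^ m := by positivity
    nlinarith [mul_nonneg (mul_nonneg hC₁.le hCP.le) h2, mul_nonneg hC₂.le h1]
  have hEle : E ≤ β / α * (C₁ * C_P * Hh ^ (k + 2) + C₂ * Hh ^ m) :=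
    stmt13_aux α β _ E hα hβ (by positivity) hEnn key
  calc E ≤ β / α * (C₁ * C_P * Hh ^ (k + 2) + C₂ * Hh ^ m) := hEle
    _ ≤ β / α * ((C₁ * C_P + C₂) * (Hh ^ (k + 2) + Hh ^ m)) := by
        apply mul_le_mul_of_nonneg_left hKle (by positivity)
    _ = β / α * (C₁ * C_P + C₂) * (Hh ^ (k + 2) + Hh ^ m) := by ring
end
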